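/- Let P(x) be a function satisfying P(x)·P(x+1) = N(x) for all x, where N(x) = Π_{j ∈ S} (1 + t^{x+j}) for a finite set S ⊂ Z and t ∈ (0,1), and P(x) → 1 as x → +∞. Then P(x) = Π_{j ∈ S} (−t^{x+j}; t²)_∞ / (−t^{x+j+1}; t²)_∞. -/

import Mathlib

open Filter

/-- Infinite q-Pochhammer symbol `(a; q)_∞ = ∏_{k≥0} (1 - a qᵏ)`. -/
noncomputable def qPochInf (a q : ℝ) : ℝ := ∏' k : ℕ, (1 - a * q ^ k)

section Aux

open Real

lemma summable_log_aux {a q : ℝ} (ha : 0 ≤ a) (hq0 : 0 ≤ q) (hq1 : q < 1) :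
    Summable (fun k : ℕ => Real.log (1 + a * q ^ k)) := by
  have hg : Summable (fun k : ℕ => a * q ^ k) :=
    (summable_geometric_of_lt_one hq0 hq1).mul_left a
  refine Summable.of_nonneg_of_le (fun k => ?_) (fun k => ?_) hg
  · exact Real.log_nonneg (by nlinarith [pow_nonneg hq0 k])
  · have h1 : 0 ≤ a * q ^ k := by positivity
    calc Real.log (1 + a * q ^ k) ≤ (1 + a * q ^ k) - 1 :=
          Real.log_le_sub_one_of_pos (by linarith)
      _ = a * q ^ k := by ring

lemma hasProd_aux {a q : ℝ} (ha : 0 ≤ a) (hq0 : 0 ≤ q) (hq1 : q < 1) :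
    HasProd (fun k : ℕ => 1 + a * q ^ k)
      (Real.exp (∑' k : ℕ, Real.log (1 + a * q ^ k))) := by
  have hs := (summable_log_aux ha hq0 hq1).hasSum
  have := hs.rexp
  refine this.congr_fun (fun k => ?_)
  have h1 : 0 < 1 + a * q ^ k := by nlinarith [pow_nonneg hq0 k]
  simp [Function.comp, Real.exp_log h1]

lemma qPochInf_neg_eq {a q : ℝ} (ha : 0 ≤ a) (hq0 : 0 ≤ q) (hq1 : q < 1) :
    qPochInf (-a) q = Real.exp (∑' k : ℕ, Real.log (1 + a * q ^ k)) := by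
  have : (fun k : ℕ => 1 - (-a) * q ^ k) = fun k : ℕ => 1 + a * q ^ k := by
    funext k; ring
  rw [qPochInf, this, (hasProd_aux ha hq0 hq1).tprod_eq]

lemma qPochInf_neg_pos {a q : ℝ} (ha : 0 ≤ a) (hq0 : 0 ≤ q) (hq1 : q < 1) :
    0 < qPochInf (-a) q := by
  rw [qPochInf_neg_eq ha hq0 hq1]; exact Real.exp_pos _

lemma one_le_qPochInf_neg {a q : ℝ} (ha : 0 ≤ a) (hq0 : 0 ≤ q) (hq1 : q < 1) :
    1 ≤ qPochInf (-a) q := by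
  rw [qPochInf_neg_eq ha hq0 hq1]
  refine Real.one_le_exp (tsum_nonneg (fun k => Real.log_nonneg ?_))
  nlinarith [pow_nonneg hq0 k]

lemma qPochInf_neg_le {a q : ℝ} (ha : 0 ≤ a) (hq0 : 0 ≤ q) (hq1 : q < 1) :
    qPochInf (-a) q ≤ Real.exp (a * (1 - q)⁻¹) := by
  rw [qPochInf_neg_eq ha hq0 hq1]
  apply Real.exp_le_exp.2
  have hg : Summable (fun k : ℕ => a * q ^ k) :=
    (summable_geometric_of_lt_one hq0 hq1).mul_left a
  have hle : (∑' k : ℕ, Real.log (1 + a * q ^ k)) ≤ ∑' k : ℕ, a * q ^ k := by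
    refine Summable.tsum_le_tsum (fun k => ?_) (summable_log_aux ha hq0 hq1) hg
    have h1 : 0 ≤ a * q ^ k := by positivity
    have := Real.log_le_sub_one_of_pos (show (0:ℝ) < 1 + a * q ^ k by linarith)
    linarith
  have heq : (∑' k : ℕ, a * q ^ k) = a * (1 - q)⁻¹ := by
    rw [tsum_mul_left, tsum_geometric_of_lt_one hq0 hq1]
  linarith

/-- The key functional relation: `(−a;q)_∞ = (1+a)·(−aq;q)_∞`. -/
lemma qPochInf_neg_step {a q : ℝ} (ha : 0 ≤ a) (hq0 : 0 ≤ q) (hq1 : q < 1) :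
    qPochInf (-a) q = (1 + a) * qPochInf (-(a * q)) q := by
  have hmul' : Multipliable (fun k : ℕ => (fun n : ℕ => 1 + a * q ^ n) (k + 1)) := by
    have := (hasProd_aux (a := a * q) (q := q) (by positivity) hq0 hq1).multipliable
    refine this.congr (fun k => ?_)
    simp only [pow_succ]
    ring
  have h0 : (fun k : ℕ => 1 - (-a) * q ^ k) = fun k : ℕ => 1 + a * q ^ k := by
    funext k; ring
  have h1 : (fun k : ℕ => 1 - (-(a * q)) * q ^ k) = fun k : ℕ => 1 + a * q ^ (k + 1) := by
    funext k; ring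
  have key := tprod_eq_zero_mul' (f := fun n : ℕ => 1 + a * q ^ n) hmul'
  rw [qPochInf, qPochInf, h0, h1, key]
  simp

end Aux

/-- If `P(x)·P(x+1) = N(x) := Π_{j ∈ S} (1 + t^{x+j})` for a finite set `S ⊂ ℤ` and
`P(x) → 1` as `x → +∞`, then `P(x) = Π_{j ∈ S} (−t^{x+j}; t²)_∞ / (−t^{x+j+1}; t²)_∞`. -/
theorem functional_equation_determines_P
    (t : ℝ) (ht0 : 0 < t) (ht1 : t < 1) (S : Finset ℤ) (P : ℝ → ℝ)
    (hfe : ∀ x : ℝ, P x * P (x + 1) = ∏ j ∈ S, (1 + t ^ (x + (j : ℝ))))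
    (hlim : Tendsto P atTop (nhds 1)) :
    ∀ x : ℝ, P x = ∏ j ∈ S,
      qPochInf (-(t ^ (x + (j : ℝ)))) (t ^ 2) /
        qPochInf (-(t ^ (x + (j : ℝ) + 1))) (t ^ 2) := by
  have hq0 : (0:ℝ) ≤ t ^ 2 := by positivity
  have hq1 : t ^ 2 < 1 := by nlinarith
  -- the building block A y = (−t^y ; t²)_∞
  set A : ℝ → ℝ := fun y => qPochInf (-(t ^ y)) (t ^ 2) with hA
  have hty : ∀ y : ℝ, 0 ≤ t ^ y := fun y => Real.rpow_nonneg ht0.le y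
  have hApos : ∀ y : ℝ, 0 < A y := fun y => qPochInf_neg_pos (hty y) hq0 hq1
  have hAstep : ∀ y : ℝ, A y = (1 + t ^ y) * A (y + 2) := by
    intro y
    have := qPochInf_neg_step (a := t ^ y) (q := t ^ 2) (hty y) hq0 hq1
    rwa [show t ^ y * t ^ 2 = t ^ (y + 2) by
      rw [Real.rpow_add ht0, Real.rpow_two]] at this
  -- limit of A at infinity
  have hAlim : Tendsto A atTop (nhds 1) := by
    have htend : Tendsto (fun y : ℝ => t ^ y) atTop (nhds 0) :=
      tendsto_rpow_atTop_of_base_lt_one t (by linarith) ht1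
    have hub : Tendsto (fun y : ℝ => Real.exp (t ^ y * (1 - t ^ 2)⁻¹)) atTop (nhds 1) := by
      have : Tendsto (fun y : ℝ => t ^ y * (1 - t ^ 2)⁻¹) atTop (nhds 0) := by
        simpa using htend.mul_const (1 - t ^ 2)⁻¹
      simpa [Function.comp_def] using (Real.continuous_exp.tendsto 0).comp this
    refine tendsto_of_tendsto_of_tendsto_of_le_of_le tendsto_const_nhds hub
      (fun y => one_le_qPochInf_neg (hty y) hq0 hq1)
      (fun y => qPochInf_neg_le (hty y) hq0 hq1)
  -- the candidate solution Q
  set Q : ℝ → ℝ := fun x => ∏ j ∈ S, A (x + (j : ℝ)) / A (x + (j : ℝ) + 1) with hQ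
  have hQpos : ∀ x : ℝ, 0 < Q x := by
    intro x
    exact Finset.prod_pos (fun j _ => div_pos (hApos _) (hApos _))
  have hQfe : ∀ x : ℝ, Q x * Q (x + 1) = ∏ j ∈ S, (1 + t ^ (x + (j : ℝ))) := by
    intro x
    rw [hQ]
    simp only
    rw [← Finset.prod_mul_distrib]
    refine Finset.prod_congr rfl (fun j _ => ?_)
    have e1 : x + 1 + (j : ℝ) = x + (j : ℝ) + 1 := by ring
    have e2 : x + (j : ℝ) + 1 + 1 = x + (j : ℝ) + 2 := by ring
    rw [e1, e2]
    have h2 := hAstep (x + (j : ℝ))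
    have n1 : A (x + (j : ℝ) + 1) ≠ 0 := (hApos _).ne'
    have n2 : A (x + (j : ℝ) + 2) ≠ 0 := (hApos _).ne'
    rw [h2]
    field_simp
  have hQlim : Tendsto Q atTop (nhds 1) := by
    rw [hQ]
    have : ∀ j ∈ S, Tendsto (fun x : ℝ => A (x + (j : ℝ)) / A (x + (j : ℝ) + 1))
        atTop (nhds 1) := by
      intro j _
      have h1 : Tendsto (fun x : ℝ => A (x + (j : ℝ))) atTop (nhds 1) :=
        hAlim.comp (tendsto_atTop_add_const_right atTop (j : ℝ) tendsto_id)
      have h2 : Tendsto (fun x : ℝ => A (x + (j : ℝ) + 1)) atTop (nhds 1) := by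
        have := hAlim.comp (tendsto_atTop_add_const_right atTop ((j : ℝ) + 1) tendsto_id)
        exact this.congr (fun x => by
          simp only [Function.comp]
          rw [show (id x : ℝ) + ((j : ℝ) + 1) = x + (j : ℝ) + 1 by simp [id]; ring])
      simpa [Pi.div_def] using h1.div h2 one_ne_zero
    simpa using tendsto_finset_prod S (fun j hj => this j hj)
  -- N x > 0
  have hNpos : ∀ x : ℝ, 0 < ∏ j ∈ S, (1 + t ^ (x + (j : ℝ))) := by
    intro x
    exact Finset.prod_pos (fun j _ => by nlinarith [hty (x + (j : ℝ))])
  -- P x ≠ 0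
  have hPne : ∀ x : ℝ, P x ≠ 0 := by
    intro x hx
    have := hfe x
    rw [hx, zero_mul] at this
    exact absurd this.symm (ne_of_gt (hNpos x))
  -- the ratio R is 2-periodic
  have hR2 : ∀ x : ℝ, P (x + 2) / Q (x + 2) = P x / Q x := by
    intro x
    have h1 := hfe x
    have h2 := hfe (x + 1)
    have h3 := hQfe x
    have h4 := hQfe (x + 1)
    have e : x + 1 + 1 = x + 2 := by ring
    rw [e] at h2 h4
    have hP1 : P (x + 1) ≠ 0 := hPne (x + 1)
    have hQx := (hQpos x).ne'
    have hQ1 := (hQpos (x + 1)).ne'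
    have hQ2 := (hQpos (x + 2)).ne'
    rw [← h3] at h1
    rw [← h4] at h2
    have key : P (x + 2) * Q x * P (x + 1) = P x * Q (x + 2) * P (x + 1) := by
      calc P (x + 2) * Q x * P (x + 1) = (P (x + 1) * P (x + 2)) * Q x := by ring
        _ = (Q (x + 1) * Q (x + 2)) * Q x := by rw [h2]
        _ = (Q x * Q (x + 1)) * Q (x + 2) := by ring
        _ = (P x * P (x + 1)) * Q (x + 2) := by rw [h1]
        _ = P x * Q (x + 2) * P (x + 1) := by ring
    have key2 := mul_right_cancel₀ hP1 key
    rw [div_eq_div_iff hQ2 hQx]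
    linarith [key2]
  have hRper : ∀ (x : ℝ) (n : ℕ), P (x + 2 * n) / Q (x + 2 * n) = P x / Q x := by
    intro x n
    induction n with
    | zero => simp
    | succ n ih =>
      have : x + 2 * ((n : ℝ) + 1) = (x + 2 * n) + 2 := by ring
      rw [Nat.cast_succ, this, hR2 (x + 2 * n), ih]
  intro x
  -- P(x + 2n)/Q(x + 2n) → 1
  have hcomp : Tendsto (fun n : ℕ => x + 2 * (n : ℝ)) atTop atTop := by
    apply tendsto_atTop_add_const_left
    exact (tendsto_natCast_atTop_atTop (R := ℝ)).const_mul_atTop (by norm_num)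
  have hPn : Tendsto (fun n : ℕ => P (x + 2 * n)) atTop (nhds 1) := hlim.comp hcomp
  have hQn : Tendsto (fun n : ℕ => Q (x + 2 * n)) atTop (nhds 1) := hQlim.comp hcomp
  have hRn : Tendsto (fun n : ℕ => P (x + 2 * n) / Q (x + 2 * n)) atTop (nhds 1) := by
    simpa [Pi.div_def] using hPn.div hQn one_ne_zero
  have hconst : (fun n : ℕ => P (x + 2 * n) / Q (x + 2 * n)) = fun _ => P x / Q x := by
    funext n; exact hRper x n
  rw [hconst] at hRn
  have h1 := tendsto_nhds_unique hRn tendsto_const_nhds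
  have hPQx : P x = Q x := by
    have hQx : Q x ≠ 0 := (hQpos x).ne'
    exact (div_eq_one_iff_eq hQx).mp h1.symm
  rw [hPQx, hQ]
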